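/- Let Q ∈ ℝ^{p×p} be symmetric positive definite and G ∈ ℝ^{p×p} satisfy QG + Gᵀ Q ≻ 0. Then for every s > 0 and every nonzero ω ∈ ℝ^p, ωᵀ (e^{-sG})ᵀ Q e^{-sG} ω < ωᵀ Q ω. -/

import Mathlib

open Matrix

open NormedSpace in
lemma exp_entry_hasDerivAt' {p : ℕ} (A : Matrix (Fin p) (Fin p) ℝ) (s : ℝ) (i j : Fin p) :
    HasDerivAt (fun t : ℝ => exp (t • A) i j) ((A * exp (s • A)) i j) s := by
  letI : SeminormedRing (Matrix (Fin p) (Fin p) ℝ) := Matrix.linftyOpSemiNormedRing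
  letI : NormedRing (Matrix (Fin p) (Fin p) ℝ) := Matrix.linftyOpNormedRing
  letI : NormedAlgebra ℝ (Matrix (Fin p) (Fin p) ℝ) := Matrix.linftyOpNormedAlgebra
  have h := hasDerivAt_exp_smul_const' A s
  let L : Matrix (Fin p) (Fin p) ℝ →L[ℝ] ℝ :=
    LinearMap.toContinuousLinearMap (Matrix.entryLinearMap ℝ ℝ i j)
  exact L.hasFDerivAt.comp_hasDerivAt s h

theorem stmt13 {p : ℕ} (Q G : Matrix (Fin p) (Fin p) ℝ) (hQ : Q.PosDef)
    (hmono : (Q * G + Gᵀ * Q).PosDef) :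
    ∀ s : ℝ, 0 < s → ∀ ω : Fin p → ℝ, ω ≠ 0 →
      (NormedSpace.exp ((-s) • G) *ᵥ ω) ⬝ᵥ (Q *ᵥ (NormedSpace.exp ((-s) • G) *ᵥ ω))
        < ω ⬝ᵥ (Q *ᵥ ω) := by
  intro s hs ω hω
  set M : ℝ → Matrix (Fin p) (Fin p) ℝ := fun t => NormedSpace.exp (t • (-G)) with hM
  set x : ℝ → Fin p → ℝ := fun t => M t *ᵥ ω with hx
  -- x t ≠ 0 for all t
  have hxne : ∀ t, x t ≠ 0 := by
    intro t h0
    have hU : IsUnit (M t) := Matrix.isUnit_exp (t • (-G))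
    have hinv : (M t)⁻¹ * M t = 1 :=
      Matrix.nonsing_inv_mul _ ((Matrix.isUnit_iff_isUnit_det _).mp hU)
    have : ω = 0 := by
      calc ω = ((M t)⁻¹ * M t) *ᵥ ω := by rw [hinv, Matrix.one_mulVec]
      _ = (M t)⁻¹ *ᵥ (M t *ᵥ ω) := by rw [Matrix.mulVec_mulVec]
      _ = (M t)⁻¹ *ᵥ 0 := by rw [show M t *ᵥ ω = 0 from h0]
      _ = 0 := Matrix.mulVec_zero _
    exact hω this
  set F : ℝ → ℝ := fun t => x t ⬝ᵥ (Q *ᵥ x t) with hF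
  set F' : ℝ → ℝ := fun t => -(x t ⬝ᵥ ((Q * G + Gᵀ * Q) *ᵥ x t)) with hF'
  -- derivative of components of x
  have hxi : ∀ t (i : Fin p), HasDerivAt (fun u => x u i) ((-(G *ᵥ x t)) i) t := by
    intro t i
    have h1 : HasDerivAt (fun u => ∑ j, M u i j * ω j)
        (∑ j, ((-G) * M t) i j * ω j) t :=
      HasDerivAt.fun_sum fun j _ => (exp_entry_hasDerivAt' (-G) t i j).mul_const (ω j)
    have e1 : (fun u => ∑ j, M u i j * ω j) = fun u => x u i := by
      funext u; simp [hx, Matrix.mulVec, dotProduct]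
    have e2 : (∑ j, ((-G) * M t) i j * ω j) = (-(G *ᵥ x t)) i := by
      have : (∑ j, ((-G) * M t) i j * ω j) = (((-G) * M t) *ᵥ ω) i := by
        simp [Matrix.mulVec, dotProduct]
      rw [this, ← Matrix.mulVec_mulVec]
      simp [hx, Matrix.neg_mulVec]
    rw [e1, e2] at h1
    exact h1
  -- derivative of components of Q *ᵥ x
  have hQxi : ∀ t (i : Fin p),
      HasDerivAt (fun u => (Q *ᵥ x u) i) ((Q *ᵥ (-(G *ᵥ x t))) i) t := by
    intro t i
    have h1 : HasDerivAt (fun u => ∑ j, Q i j * x u j)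
        (∑ j, Q i j * (-(G *ᵥ x t)) j) t :=
      HasDerivAt.fun_sum fun j _ => (hxi t j).const_mul (Q i j)
    have e1 : (fun u => ∑ j, Q i j * x u j) = fun u => (Q *ᵥ x u) i := by
      funext u; simp [Matrix.mulVec, dotProduct]
    have e2 : (∑ j, Q i j * (-(G *ᵥ x t)) j) = (Q *ᵥ (-(G *ᵥ x t))) i := by
      simp [Matrix.mulVec, dotProduct]
    rw [e1, e2] at h1
    exact h1
  -- derivative of F
  have hFd : ∀ t, HasDerivAt F (F' t) t := by
    intro t
    have h1 : HasDerivAt (fun u => ∑ i, x u i * (Q *ᵥ x u) i)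
        (∑ i, ((-(G *ᵥ x t)) i * (Q *ᵥ x t) i + x t i * (Q *ᵥ (-(G *ᵥ x t))) i)) t :=
      HasDerivAt.fun_sum fun i _ => (hxi t i).mul (hQxi t i)
    have e1 : (fun u => ∑ i, x u i * (Q *ᵥ x u) i) = F := by
      funext u; simp [hF, dotProduct]
    have e2 : (∑ i, ((-(G *ᵥ x t)) i * (Q *ᵥ x t) i + x t i * (Q *ᵥ (-(G *ᵥ x t))) i))
        = F' t := by
      rw [Finset.sum_add_distrib]
      have hA : (∑ i, (-(G *ᵥ x t)) i * (Q *ᵥ x t) i)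
          = -((G *ᵥ x t) ⬝ᵥ (Q *ᵥ x t)) := by
        simp [dotProduct]
      have hB : (∑ i, x t i * (Q *ᵥ (-(G *ᵥ x t))) i)
          = -(x t ⬝ᵥ (Q *ᵥ (G *ᵥ x t))) := by
        simp [dotProduct, Matrix.mulVec_neg, Finset.sum_neg_distrib]
      rw [hA, hB]
      have key : x t ⬝ᵥ ((Q * G + Gᵀ * Q) *ᵥ x t)
          = (G *ᵥ x t) ⬝ᵥ (Q *ᵥ x t) + x t ⬝ᵥ (Q *ᵥ (G *ᵥ x t)) := by
        rw [Matrix.add_mulVec, dotProduct_add, ← Matrix.mulVec_mulVec,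
          ← Matrix.mulVec_mulVec, dotProduct_mulVec _ Gᵀ _,
          Matrix.vecMul_transpose]
        ring
      show _ = -(x t ⬝ᵥ ((Q * G + Gᵀ * Q) *ᵥ x t))
      rw [key]; ring
    rw [e1, e2] at h1
    exact h1
  have hFneg : ∀ t, F' t < 0 := by
    intro t
    have := hmono.dotProduct_mulVec_pos (hxne t)
    simp only [star_trivial] at this
    simpa [hF'] using neg_neg_of_pos this
  have hanti : StrictAnti F := strictAnti_of_hasDerivAt_neg hFd hFneg
  have h0 : F 0 = ω ⬝ᵥ (Q *ᵥ ω) := by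
    simp [hF, hx, hM, NormedSpace.exp_zero]
  have hgoal : F s < F 0 := hanti hs
  rw [h0] at hgoal
  have hrw : (-s) • G = s • (-G) := by rw [neg_smul, smul_neg]
  rw [hrw]
  exact hgoal
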